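/- Let F be a field, q ∈ F with q ≠ 0, q + 1 ≠ 0 and q²(s−1)(t−1) − 1 ≠ 0 in F, and s, t ≥ 1 natural numbers. Then the q-distance matrix D of K_{s,t} satisfies D·x = λ·𝟙, i.e. for every vertex u, ∑_{v} D(u,v)·x(v) = λ, where x is the vector and λ the scalar defined in the context. -/

import Mathlib

/-- The `q`-distance matrix of the complete bipartite graph `K_{s,t}`,
indexed by `Fin s ⊕ Fin t`: diagonal entries are `0`, entries between the two
parts are `1`, and off-diagonal entries within a part are `q + 1`. -/
def qDistKst (F : Type*) [Field F] (q : F) (s t : ℕ) :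
    Matrix (Fin s ⊕ Fin t) (Fin s ⊕ Fin t) F :=
  Matrix.of fun u v =>
    if u = v then 0 else if u.isLeft = v.isLeft then q + 1 else 1

/-- The special vector `x` of `K_{s,t}`. -/
def xVecKst (F : Type*) [Field F] (q : F) (s t : ℕ) :
    Fin s ⊕ Fin t → F :=
  Sum.elim
    (fun _ => (q * ((t : F) - 1) - 1) /
      ((q + 1) * (q ^ 2 * ((s : F) - 1) * ((t : F) - 1) - 1)))
    (fun _ => (q * ((s : F) - 1) - 1) /
      ((q + 1) * (q ^ 2 * ((s : F) - 1) * ((t : F) - 1) - 1)))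

/-- The scalar `λ` of `K_{s,t}`. -/
def lamKst (F : Type*) [Field F] (q : F) (s t : ℕ) : F :=
  ((q + 1) ^ 2 * ((s : F) - 1) * ((t : F) - 1) - (s : F) * (t : F)) /
    ((q + 1) * (q ^ 2 * ((s : F) - 1) * ((t : F) - 1) - 1))

lemma sum_offdiag {F : Type*} [Field F] {n : ℕ} (i : Fin n) (c : F) :
    ∑ j : Fin n, (if i = j then (0 : F) else c) = ((n : F) - 1) * c := by
  have h1 : ∑ j : Fin n, (if i = j then (0 : F) else c)
      = ∑ j : Fin n, (c - if i = j then c else 0) := by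
    apply Finset.sum_congr rfl
    intro j _
    by_cases h : i = j <;> simp [h]
  rw [h1, Finset.sum_sub_distrib, Finset.sum_ite_eq, Finset.sum_const]
  simp [sub_mul]

theorem qDist_mulVec_x_eq_lambda (F : Type*) [Field F] (q : F)
    (s t : ℕ) (hs : 1 ≤ s) (ht : 1 ≤ t) (hq0 : q ≠ 0) (hq : q + 1 ≠ 0)
    (hΔ : q ^ 2 * ((s : F) - 1) * ((t : F) - 1) - 1 ≠ 0) :
    ∀ u, ∑ v, qDistKst F q s t u v * xVecKst F q s t v = lamKst F q s t := by
  intro u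
  cases u with
  | inl i =>
      simp only [qDistKst, xVecKst, lamKst, Matrix.of_apply, Fintype.sum_sum_type,
        Sum.elim_inl, Sum.elim_inr, Sum.isLeft_inl, Sum.isLeft_inr, Sum.inl.injEq,
        reduceCtorEq, if_false, if_true]
      rw [← Finset.sum_mul, sum_offdiag, Finset.sum_const, Finset.card_univ,
        Fintype.card_fin, nsmul_eq_mul]
      field_simp
      ring
  | inr i =>
      simp only [qDistKst, xVecKst, lamKst, Matrix.of_apply, Fintype.sum_sum_type,
        Sum.elim_inl, Sum.elim_inr, Sum.isLeft_inl, Sum.isLeft_inr, Sum.inr.injEq,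
        reduceCtorEq, if_false, if_true]
      rw [Finset.sum_const, Finset.card_univ, Fintype.card_fin,
        ← Finset.sum_mul, sum_offdiag, nsmul_eq_mul]
      field_simp
      ring
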